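/- Let $a_2>0$ and $D>2$. Suppose $\omega$ is a twice continuously differentiable real function on $(0,\infty)$ satisfying $\omega''(r)+\frac{1}{r}\omega'(r)=-(1+a_2)e^{\omega(r)}$ for all $r>0$, $\int_0^\infty r\,e^{\omega(r)}\,dr<\infty$, $\omega'(1)=0$, $\omega(1)=\ln\frac{D^2-4}{2(1+a_2)}$, and such that $\lim_{r\to0^+}r\,\omega'(r)$ exists and belongs to the interval $(0,\,D-2]$. Then $\omega(r)=\ln\frac{2D^2(D^2-4)r^{D-2}}{(1+a_2)(D+2+(D-2)r^D)^2}$ for all $r>0$. -/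

import Mathlib

open Real Set Filter Topology MeasureTheory

noncomputable def Wfun (c D r : ℝ) : ℝ :=
  Real.log (2*D^2*(D^2-4)) + (D-2) * Real.log r - Real.log c
    - 2 * Real.log (D+2+(D-2)*r^D)

noncomputable def W1fun (D r : ℝ) : ℝ :=
  (D-2) * r⁻¹ - 2 * ((D-2)*(D*r^(D-1)) / (D+2+(D-2)*r^D))

noncomputable def W2fun (D r : ℝ) : ℝ :=
  (D-2) * (-(r^2)⁻¹)
    - 2 * (((D-2)*(D*((D-1)*r^(D-2))) * (D+2+(D-2)*r^D)
        - (D-2)*(D*r^(D-1)) * ((D-2)*(D*r^(D-1)))) / (D+2+(D-2)*r^D)^2)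

lemma gpos {D r : ℝ} (hD : 2 < D) (hr : 0 < r) : 0 < D+2+(D-2)*r^D := by
  have h1 : (0:ℝ) < r ^ D := Real.rpow_pos_of_pos hr D
  nlinarith

lemma hasDerivAt_g {D r : ℝ} (hr : 0 < r) :
    HasDerivAt (fun x : ℝ => D+2+(D-2)*x^D) ((D-2)*(D*r^(D-1))) r :=
  ((Real.hasDerivAt_rpow_const (Or.inl hr.ne')).const_mul (D-2)).const_add (D+2)

lemma hasDerivAt_Wfun {c D r : ℝ} (hD : 2 < D) (hr : 0 < r) :
    HasDerivAt (Wfun c D) (W1fun D r) r := by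
  have hg := hasDerivAt_g (D := D) hr
  have hlog : HasDerivAt (fun x : ℝ => Real.log (D+2+(D-2)*x^D))
      (((D-2)*(D*r^(D-1)))/(D+2+(D-2)*r^D)) r := hg.log (gpos hD hr).ne'
  have hlr : HasDerivAt Real.log r⁻¹ r := Real.hasDerivAt_log hr.ne'
  have := (((hlr.const_mul (D-2)).const_add
      (Real.log (2*D^2*(D^2-4)))).sub_const (Real.log c)).sub (hlog.const_mul 2)
  exact this

lemma hasDerivAt_W1fun {D r : ℝ} (hD : 2 < D) (hr : 0 < r) :
    HasDerivAt (W1fun D) (W2fun D r) r := by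
  have hg := hasDerivAt_g (D := D) hr
  have hh : HasDerivAt (fun x : ℝ => (D-2)*(D*x^(D-1)))
      ((D-2)*(D*((D-1)*r^(D-2)))) r := by
    have := ((Real.hasDerivAt_rpow_const (p := D-1) (Or.inl hr.ne')).const_mul D).const_mul (D-2)
    rw [show D - 1 - 1 = D - 2 by ring] at this
    exact this
  have hq := hh.div hg (gpos hD hr).ne'
  have hinv : HasDerivAt (fun x : ℝ => x⁻¹) (-(r^2)⁻¹) r := hasDerivAt_inv hr.ne'
  exact (hinv.const_mul (D-2)).sub (hq.const_mul 2)

lemma ode_W {c D r : ℝ} (hc : 0 < c) (hD : 2 < D) (hr : 0 < r) :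
    W2fun D r + (1/r) * W1fun D r = -c * Real.exp (Wfun c D r) := by
  have hg := gpos hD hr
  have hA : (0:ℝ) < 2*D^2*(D^2-4) := by
    have h4 : (0:ℝ) < D^2 - 4 := by nlinarith
    positivity
  have hRpos : (0:ℝ) < r ^ D := Real.rpow_pos_of_pos hr D
  have e1 : r^(D-1) = r^D / r := by
    rw [Real.rpow_sub hr, Real.rpow_one]
  have e2 : r^(D-2) = r^D / r^2 := by
    rw [Real.rpow_sub hr, Real.rpow_two]
  have eexp : Real.exp (Wfun c D r)
      = 2*D^2*(D^2-4) * (r^D/r^2) / (c * (D+2+(D-2)*r^D)^2) := by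
    unfold Wfun
    rw [sub_eq_add_neg, sub_eq_add_neg, Real.exp_add, Real.exp_add, Real.exp_add,
      Real.exp_neg, Real.exp_neg, Real.exp_log hA, Real.exp_log hc,
      mul_comm (D-2) (Real.log r), Real.exp_mul, Real.exp_log hr,
      mul_comm (2:ℝ) (Real.log _), Real.exp_mul, Real.exp_log hg]
    rw [Real.rpow_two, e2]
    field_simp
  rw [eexp]
  unfold W2fun W1fun
  rw [e1, e2]
  have hr' : r ≠ 0 := hr.ne'
  have hg' : D+2+(D-2)*r^D ≠ 0 := hg.ne'
  field_simp
  ring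

lemma Wfun_eq {c D r : ℝ} (hc : 0 < c) (hD : 2 < D) (hr : 0 < r) :
    Real.log (2*D^2*(D^2-4) * r^(D-2) / (c*(D+2+(D-2)*r^D)^2)) = Wfun c D r := by
  have hg := gpos hD hr
  have hA : (0:ℝ) < 2*D^2*(D^2-4) := by
    have h4 : (0:ℝ) < D^2 - 4 := by nlinarith
    positivity
  have hrp : (0:ℝ) < r ^ (D-2) := Real.rpow_pos_of_pos hr _
  rw [Real.log_div (by positivity) (by positivity), Real.log_mul hA.ne' hrp.ne',
    Real.log_mul hc.ne' (by positivity), Real.log_rpow hr, Real.log_pow]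
  unfold Wfun
  push_cast
  ring

lemma Wfun_one {c D : ℝ} (hc : 0 < c) (hD : 2 < D) :
    Wfun c D 1 = Real.log ((D^2-4)/(2*c)) := by
  have hD0 : D ≠ 0 := by linarith
  have h := Wfun_eq hc hD (r := 1) one_pos
  rw [Real.one_rpow, Real.one_rpow] at h
  rw [← h]
  congr 1
  have h2 : D + 2 + (D-2)*1 = 2*D := by ring
  rw [h2, div_eq_div_iff (mul_ne_zero hc.ne' (pow_ne_zero 2 (mul_ne_zero two_ne_zero hD0)))
    (mul_ne_zero two_ne_zero hc.ne')]
  ring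

lemma W1fun_one {D : ℝ} (hD : 2 < D) : W1fun D 1 = 0 := by
  have hD0 : D ≠ 0 := by linarith
  unfold W1fun
  rw [Real.one_rpow, Real.one_rpow]
  have h2 : D + 2 + (D-2) * 1 = 2 * D := by ring
  rw [h2]
  field_simp
  ring

lemma expmin_lip (M x y : ℝ) :
    |Real.exp (min x M) - Real.exp (min y M)| ≤ Real.exp M * |x - y| := by
  have hb : ∀ z ∈ Iic M, ‖deriv Real.exp z‖ ≤ Real.exp M := by
    intro z hz
    rw [Real.deriv_exp, Real.norm_eq_abs, abs_of_pos (Real.exp_pos _)]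
    exact Real.exp_le_exp.2 hz
  have h := Convex.norm_image_sub_le_of_norm_deriv_le (f := Real.exp) (s := Iic M)
    (fun z _ => Real.differentiable_exp z) hb (convex_Iic M)
    (mem_Iic.2 (min_le_right y M)) (mem_Iic.2 (min_le_right x M))
  rw [Real.norm_eq_abs, Real.norm_eq_abs] at h
  refine h.trans ?_
  have h2 : |min x M - min y M| ≤ |x - y| := by
    have := abs_min_sub_min_le_max x M y M
    simpa using this.trans (by simp [abs_nonneg])
  exact mul_le_mul_of_nonneg_left h2 (Real.exp_pos M).le

lemma expmin_lip' (M x y : ℝ) :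
    |Real.exp (min x M) - Real.exp (min y M)| ≤ Real.exp M * |x - y| := by
  have hb : ∀ z ∈ Iic M, ‖deriv Real.exp z‖ ≤ Real.exp M := by
    intro z hz
    rw [Real.deriv_exp, Real.norm_eq_abs, abs_of_pos (Real.exp_pos _)]
    exact Real.exp_le_exp.2 hz
  have h := Convex.norm_image_sub_le_of_norm_deriv_le (f := Real.exp) (s := Iic M)
    (fun z _ => Real.differentiable_exp z) hb (convex_Iic M)
    (mem_Iic.2 (min_le_right y M)) (mem_Iic.2 (min_le_right x M))
  rw [Real.norm_eq_abs, Real.norm_eq_abs] at h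
  refine h.trans ?_
  have h2 : |min x M - min y M| ≤ |x - y| := by
    have := abs_min_sub_min_le_max x M y M
    simpa using this.trans (by simp [abs_nonneg])
  exact mul_le_mul_of_nonneg_left h2 (Real.exp_pos M).le

lemma ode2_unique {c a b M t₀ : ℝ} (hc : 0 < c) (ha : 0 < a)
    (f1 f2 g1 g2 : ℝ → ℝ)
    (hf1 : ∀ t ∈ Ioo a b, HasDerivAt f1 (f2 t) t)
    (hf2 : ∀ t ∈ Ioo a b, HasDerivAt f2 (-f2 t * t⁻¹ - c * Real.exp (f1 t)) t)
    (hfM : ∀ t ∈ Ioo a b, f1 t ≤ M)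
    (hg1 : ∀ t ∈ Ioo a b, HasDerivAt g1 (g2 t) t)
    (hg2 : ∀ t ∈ Ioo a b, HasDerivAt g2 (-g2 t * t⁻¹ - c * Real.exp (g1 t)) t)
    (hgM : ∀ t ∈ Ioo a b, g1 t ≤ M)
    (ht₀ : t₀ ∈ Ioo a b) (he1 : f1 t₀ = g1 t₀) (he2 : f2 t₀ = g2 t₀) :
    ∀ t ∈ Ioo a b, f1 t = g1 t := by
  have hKnn : (0:ℝ) ≤ 1 + a⁻¹ + c * Real.exp M := by positivity
  set K : NNReal := Real.toNNReal (1 + a⁻¹ + c * Real.exp M) with hKdef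
  have hKcoe : (K : ℝ) = 1 + a⁻¹ + c * Real.exp M := Real.coe_toNNReal _ hKnn
  have hv : ∀ t : ℝ, LipschitzWith K
      (fun p : ℝ × ℝ => (p.2, -p.2 * (max a t)⁻¹ - c * Real.exp (min p.1 M))) := by
    intro t
    apply LipschitzWith.of_dist_le_mul
    intro p q
    have hm : 0 < max a t := lt_of_lt_of_le ha (le_max_left a t)
    have hminv : (max a t)⁻¹ ≤ a⁻¹ := inv_anti₀ ha (le_max_left a t)
    rw [Prod.dist_eq, Prod.dist_eq, hKcoe]
    simp only [Real.dist_eq]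
    have hd1n : (0:ℝ) ≤ |p.1 - q.1| := abs_nonneg _
    have hd2n : (0:ℝ) ≤ |p.2 - q.2| := abs_nonneg _
    have hmax1 : |p.1 - q.1| ≤ max |p.1 - q.1| |p.2 - q.2| := le_max_left _ _
    have hmax2 : |p.2 - q.2| ≤ max |p.1 - q.1| |p.2 - q.2| := le_max_right _ _
    have hmn : (0:ℝ) ≤ max |p.1 - q.1| |p.2 - q.2| := hd2n.trans hmax2
    have hcM : (0:ℝ) < c * Real.exp M := by positivity
    have hainv : (0:ℝ) < a⁻¹ := by positivity
    apply max_le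
    · nlinarith [mul_nonneg (by positivity : (0:ℝ) ≤ a⁻¹ + c * Real.exp M) hmn]
    · have heq : -p.2 * (max a t)⁻¹ - c * Real.exp (min p.1 M)
          - (-q.2 * (max a t)⁻¹ - c * Real.exp (min q.1 M))
          = (q.2 - p.2) * (max a t)⁻¹
            + c * (Real.exp (min q.1 M) - Real.exp (min p.1 M)) := by ring
      rw [heq]
      refine (abs_add_le _ _).trans ?_
      have e1 : |(q.2 - p.2) * (max a t)⁻¹| ≤ |p.2 - q.2| * a⁻¹ := by
        rw [abs_mul, abs_of_pos (by positivity : (0:ℝ) < (max a t)⁻¹), abs_sub_comm]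
        exact mul_le_mul_of_nonneg_left hminv hd2n
      have e2 : |c * (Real.exp (min q.1 M) - Real.exp (min p.1 M))|
          ≤ c * Real.exp M * |p.1 - q.1| := by
        rw [abs_mul, abs_of_pos hc, mul_assoc]
        refine mul_le_mul_of_nonneg_left ?_ hc.le
        have := expmin_lip' M q.1 p.1
        rwa [abs_sub_comm q.1 p.1] at this
      have t1 : |p.2 - q.2| * a⁻¹ ≤ (max |p.1 - q.1| |p.2 - q.2|) * a⁻¹ :=
        mul_le_mul_of_nonneg_right hmax2 hainv.le
      have t2 : c * Real.exp M * |p.1 - q.1|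
          ≤ c * Real.exp M * (max |p.1 - q.1| |p.2 - q.2|) :=
        mul_le_mul_of_nonneg_left hmax1 hcM.le
      nlinarith
  have hF : ∀ t ∈ Ioo a b, HasDerivAt (fun t => (f1 t, f2 t))
      ((fun t (p : ℝ × ℝ) => (p.2, -p.2 * (max a t)⁻¹ - c * Real.exp (min p.1 M))) t
        (f1 t, f2 t)) t ∧ (f1 t, f2 t) ∈ (univ : Set (ℝ × ℝ)) := by
    intro t ht
    refine ⟨?_, mem_univ _⟩
    show HasDerivAt _ (f2 t, -f2 t * (max a t)⁻¹ - c * Real.exp (min (f1 t) M)) t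
    rw [min_eq_left (hfM t ht), max_eq_right ht.1.le]
    exact (hf1 t ht).prodMk (hf2 t ht)
  have hG : ∀ t ∈ Ioo a b, HasDerivAt (fun t => (g1 t, g2 t))
      ((fun t (p : ℝ × ℝ) => (p.2, -p.2 * (max a t)⁻¹ - c * Real.exp (min p.1 M))) t
        (g1 t, g2 t)) t ∧ (g1 t, g2 t) ∈ (univ : Set (ℝ × ℝ)) := by
    intro t ht
    refine ⟨?_, mem_univ _⟩
    show HasDerivAt _ (g2 t, -g2 t * (max a t)⁻¹ - c * Real.exp (min (g1 t) M)) t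
    rw [min_eq_left (hgM t ht), max_eq_right ht.1.le]
    exact (hg1 t ht).prodMk (hg2 t ht)
  have hEqOn := ODE_solution_unique_of_mem_Ioo (s := fun _ => (univ : Set (ℝ × ℝ)))
    (fun t _ => (hv t).lipschitzOnWith) ht₀ hF hG (by rw [Prod.mk.injEq]; exact ⟨he1, he2⟩)
  intro t ht
  exact congrArg Prod.fst (hEqOn ht)

/-- classification of radial solutions of the Liouville equation with the
given normalizations. -/
theorem omega2_classification (a₂ D : ℝ) (ha₂ : 0 < a₂) (hD : 2 < D)
    (ω : ℝ → ℝ) (hsm : ContDiffOn ℝ 2 ω (Ioi 0))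
    (hode : ∀ r > (0 : ℝ), deriv (deriv ω) r + (1 / r) * deriv ω r = -(1 + a₂) * exp (ω r))
    (hint : IntegrableOn (fun r => r * exp (ω r)) (Ioi 0))
    (hd1 : deriv ω 1 = 0)
    (hv1 : ω 1 = log ((D ^ 2 - 4) / (2 * (1 + a₂))))
    (hlim : ∃ L ∈ Ioc (0 : ℝ) (D - 2),
      Tendsto (fun r => r * deriv ω r) (𝓝[>] 0) (𝓝 L)) :
    ∀ r > (0 : ℝ), ω r =
      log (2 * D ^ 2 * (D ^ 2 - 4) * r ^ (D - 2)
        / ((1 + a₂) * (D + 2 + (D - 2) * r ^ D) ^ 2)) := by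
  intro r hr
  have hc : (0:ℝ) < 1 + a₂ := by linarith
  -- regularity of ω
  have hω1 : ∀ t : ℝ, 0 < t → HasDerivAt ω (deriv ω t) t := by
    intro t ht
    exact ((hsm.contDiffAt (isOpen_Ioi.mem_nhds ht)).differentiableAt
      (by norm_num)).hasDerivAt
  have hsm' : ContDiffOn ℝ 1 (deriv ω) (Ioi 0) :=
    hsm.deriv_of_isOpen isOpen_Ioi (by norm_num)
  have hω2 : ∀ t : ℝ, 0 < t → HasDerivAt (deriv ω) (deriv (deriv ω) t) t := by
    intro t ht
    exact ((hsm'.contDiffAt (isOpen_Ioi.mem_nhds ht)).differentiableAt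
      (by norm_num)).hasDerivAt
  -- interval setup
  obtain ⟨aa, ha, ha1, har⟩ : ∃ aa : ℝ, 0 < aa ∧ aa < 1 ∧ aa < r :=
    ⟨min 1 r / 2, by positivity, by
      have h1 : min 1 r ≤ 1 := min_le_left 1 r
      linarith [lt_min one_pos hr], by
      have h2 : min 1 r ≤ r := min_le_right 1 r
      linarith [lt_min one_pos hr]⟩
  obtain ⟨bb, hb1, hbr⟩ : ∃ bb : ℝ, 1 < bb ∧ r < bb := ⟨max 1 r + 1,
    by have := le_max_left 1 r; linarith, by have := le_max_right 1 r; linarith⟩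
  have hab : aa < bb := by linarith
  have hsub : Icc aa bb ⊆ Ioi (0:ℝ) := fun t ht => lt_of_lt_of_le ha ht.1
  have h1mem : (1:ℝ) ∈ Ioo aa bb := ⟨ha1, hb1⟩
  have hrmem : r ∈ Ioo aa bb := ⟨har, hbr⟩
  -- bound M
  have hcω : ContinuousOn ω (Icc aa bb) := hsm.continuousOn.mono hsub
  have hcW : ContinuousOn (Wfun (1 + a₂) D) (Icc aa bb) := fun t ht =>
    (hasDerivAt_Wfun hD (hsub ht)).continuousAt.continuousWithinAt
  have hne : (Icc aa bb).Nonempty := ⟨aa, left_mem_Icc.2 hab.le⟩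
  obtain ⟨x₁, _, hx₁⟩ := isCompact_Icc.exists_isMaxOn hne hcω
  obtain ⟨x₂, _, hx₂⟩ := isCompact_Icc.exists_isMaxOn hne hcW
  obtain ⟨M, hMω, hMW⟩ : ∃ M : ℝ, (∀ t ∈ Ioo aa bb, ω t ≤ M) ∧
      (∀ t ∈ Ioo aa bb, Wfun (1 + a₂) D t ≤ M) :=
    ⟨max (ω x₁) (Wfun (1 + a₂) D x₂),
      fun t ht => (hx₁ (Ioo_subset_Icc_self ht)).trans (le_max_left _ _),
      fun t ht => (hx₂ (Ioo_subset_Icc_self ht)).trans (le_max_right _ _)⟩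
  -- derivative hypotheses for the uniqueness lemma
  have hf1 : ∀ t ∈ Ioo aa bb, HasDerivAt ω (deriv ω t) t := fun t ht =>
    hω1 t (hsub (Ioo_subset_Icc_self ht))
  have hf2 : ∀ t ∈ Ioo aa bb, HasDerivAt (deriv ω)
      (-(deriv ω t) * t⁻¹ - (1 + a₂) * Real.exp (ω t)) t := by
    intro t ht
    have ht0 : 0 < t := hsub (Ioo_subset_Icc_self ht)
    have hode' := hode t ht0
    rw [one_div] at hode'
    have heq : deriv (deriv ω) t = -(deriv ω t) * t⁻¹ - (1 + a₂) * Real.exp (ω t) := by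
      linarith
    exact heq ▸ hω2 t ht0
  have hg1 : ∀ t ∈ Ioo aa bb, HasDerivAt (Wfun (1 + a₂) D) (W1fun D t) t := fun t ht =>
    hasDerivAt_Wfun hD (hsub (Ioo_subset_Icc_self ht))
  have hg2 : ∀ t ∈ Ioo aa bb, HasDerivAt (W1fun D)
      (-(W1fun D t) * t⁻¹ - (1 + a₂) * Real.exp (Wfun (1 + a₂) D t)) t := by
    intro t ht
    have ht0 : 0 < t := hsub (Ioo_subset_Icc_self ht)
    have hode' := ode_W (c := 1 + a₂) hc hD ht0
    rw [one_div] at hode'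
    have heq : W2fun D t = -(W1fun D t) * t⁻¹ - (1 + a₂) * Real.exp (Wfun (1 + a₂) D t) := by
      linarith
    exact heq ▸ hasDerivAt_W1fun hD ht0
  have he1 : ω 1 = Wfun (1 + a₂) D 1 := by rw [hv1, Wfun_one hc hD]
  have he2 : deriv ω 1 = W1fun D 1 := by rw [hd1, W1fun_one hD]
  have := ode2_unique hc ha ω (deriv ω) (Wfun (1 + a₂) D) (W1fun D)
    hf1 hf2 hMω hg1 hg2 hMW h1mem he1 he2 r hrmem
  rw [Wfun_eq hc hD hr]
  exact this
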